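/- There is a constant C depending only on g and k with the following property. Let H be a k-local Hamiltonian with interaction strength g on the N-spin system, with ground energy 0, unique normalized ground state |Ω⟩, and spectral gap δE > 0. Then for every subset of spins L with δE ≤ g|L|, every additive operator A_L on L, and every median m of A_L in the state |Ω⟩, the mean and the median satisfy |⟨Ω|A_L|Ω⟩ − m| ≤ C·√(|L|/δE). -/

import Mathlib

noncomputable section

open scoped ComplexConjugate

/-- The Hilbert space of `N` spins, each of local dimension `d`:
the `N`-fold tensor product `⊗ ℂ^d`, realized as the space with orthonormal
basis indexed by configurations `Fin N → Fin d`. -/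
abbrev SpinSpace (N d : ℕ) : Type := EuclideanSpace ℂ (Fin N → Fin d)

/-- Operators on the spin system. -/
abbrev SpinOp (N d : ℕ) : Type := SpinSpace N d →L[ℂ] SpinSpace N d

variable {N d : ℕ}

/-- The standard (computational) basis vector labelled by a configuration. -/
def basisVec (f : Fin N → Fin d) : SpinSpace N d := EuclideanSpace.single f 1

/-- The matrix entry `⟨f| A |g⟩` of an operator in the computational basis. -/
def matEntry (A : SpinOp N d) (f g : Fin N → Fin d) : ℂ :=
  inner ℂ (basisVec f) (A (basisVec g))

/-- `A` is supported on the subset `X` of spins: under the tensor factorization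
`ℋ ≅ ℋ_X ⊗ ℋ_{Xᶜ}` it has the form `o ⊗ I`.  Concretely: matrix entries vanish
unless the two configurations agree outside `X`, and entries depend only on the
restrictions of the configurations to `X`. -/
def SupportedOn (X : Finset (Fin N)) (A : SpinOp N d) : Prop :=
  (∀ f g : Fin N → Fin d, (∃ i, i ∉ X ∧ f i ≠ g i) → matEntry A f g = 0) ∧
  (∀ f g f' g' : Fin N → Fin d,
      (∀ i ∈ X, f i = f' i) → (∀ i ∈ X, g i = g' i) →
      (∀ i, i ∉ X → f i = g i) → (∀ i, i ∉ X → f' i = g' i) →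
      matEntry A f g = matEntry A f' g')

/-- A `q`-local operator: a sum of operators, each supported on at most `q` spins. -/
def IsLocalOp (q : ℕ) (A : SpinOp N d) : Prop :=
  ∃ (n : ℕ) (X : Fin n → Finset (Fin N)) (o : Fin n → SpinOp N d),
    (∀ t, (X t).card ≤ q ∧ SupportedOn (X t) (o t)) ∧ A = ∑ t, o t

/-- A `k`-local Hamiltonian with interaction strength `g`: a sum of Hermitian
terms, each supported on at most `k` spins, such that for every spin the total
norm of the terms acting on it is at most `g`. -/
def IsKLocalHamiltonian (k : ℕ) (g : ℝ) (H : SpinOp N d) : Prop :=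
  ∃ (n : ℕ) (X : Fin n → Finset (Fin N)) (h : Fin n → SpinOp N d),
    (∀ t, (X t).card ≤ k ∧ SupportedOn (X t) (h t) ∧ IsSelfAdjoint (h t)) ∧
    (∀ i : Fin N, ∑ t ∈ Finset.univ.filter (fun t => i ∈ X t), ‖h t‖ ≤ g) ∧
    H = ∑ t, h t

/-- An additive operator `A = ∑_{i ∈ L} a_i`, each `a_i` Hermitian, supported on
the single spin `i`, with `‖a_i‖ ≤ 1`. -/
def IsAdditiveOn (L : Finset (Fin N)) (a : Fin N → SpinOp N d) (A : SpinOp N d) : Prop :=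
  (∀ i ∈ L, SupportedOn {i} (a i) ∧ IsSelfAdjoint (a i) ∧ ‖a i‖ ≤ 1) ∧
  A = ∑ i ∈ L, a i

/-- The span of all eigenvectors of `A` whose (real) eigenvalue satisfies `P`. -/
def eigSpan (A : SpinOp N d) (P : ℝ → Prop) : Submodule ℂ (SpinSpace N d) :=
  ⨆ (a : ℝ) (_ : P a), Module.End.eigenspace (A : SpinSpace N d →ₗ[ℂ] SpinSpace N d) (a : ℂ)

/-- Spectral projector of `A` onto the eigenvalues satisfying `P` (the orthogonal
projection onto the span of the corresponding eigenvectors). -/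
def specProj (A : SpinOp N d) (P : ℝ → Prop) : SpinOp N d :=
  (eigSpan A P).subtypeL.comp ((eigSpan A P).orthogonalProjectionOnto)

/-- `m` is a median of `A` in the state `ψ`. -/
def IsMedian (A : SpinOp N d) (ψ : SpinSpace N d) (m : ℝ) : Prop :=
  (1:ℝ)/2 ≤ (inner ℂ ψ ((specProj A (fun a => a ≤ m)) ψ) : ℂ).re ∧
  (1:ℝ)/2 ≤ (inner ℂ ψ ((specProj A (fun a => m ≤ a)) ψ) : ℂ).re

/-- The state `ψ` satisfies the local-reversibility bound with function `f`. -/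
def SatisfiesLR (f : ℝ → ℝ) (ψ : SpinSpace N d) : Prop :=
  ∀ (L : Finset (Fin N)) (Γ : SpinOp N d), SupportedOn L Γ →
    (inner ℂ ψ (Γ ψ) : ℂ) ≠ 0 →
    ∀ q : ℕ, 0 < q →
      ∃ R : SpinOp N d, IsLocalOp q R ∧
        ‖R (Γ ψ) - ψ‖ ≤ ‖Γ‖ / ‖(inner ℂ ψ (Γ ψ))‖ * f ((q : ℝ) / Real.sqrt (L.card))

/-- `H` has ground energy `0` with unique normalized ground state `Ω` and spectral
gap (at least) `δE`: `Ω` is a null state, every null state is proportional to `Ω`,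
and on the orthogonal complement of `Ω` the energy is at least `δE`. -/
def IsGappedGround (H : SpinOp N d) (Ω : SpinSpace N d) (δE : ℝ) : Prop :=
  ‖Ω‖ = 1 ∧ H Ω = 0 ∧
  (∀ φ : SpinSpace N d, H φ = 0 → ∃ c : ℂ, φ = c • Ω) ∧
  (∀ φ : SpinSpace N d, (inner ℂ Ω φ : ℂ) = 0 → δE * ‖φ‖ ^ 2 ≤ (inner ℂ φ (H φ) : ℂ).re)


variable {N d : ℕ}

lemma matEntry_eq_apply (A : SpinOp N d) (f g : Fin N → Fin d) :
    matEntry A f g = (A (basisVec g)) f := by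
  classical
  simp [matEntry, basisVec, EuclideanSpace.inner_single_left]

lemma spinOp_ext {A B : SpinOp N d}
    (h : ∀ f g, matEntry A f g = matEntry B f g) : A = B := by
  classical
  apply ContinuousLinearMap.ext
  intro v
  have hv : v = ∑ f, v f • basisVec f := by
    have := (EuclideanSpace.basisFun (Fin N → Fin d) ℂ).sum_repr v
    simpa [basisVec, EuclideanSpace.basisFun_apply, EuclideanSpace.basisFun_repr] using this.symm
  rw [hv, map_sum, map_sum]
  refine Finset.sum_congr rfl fun g _ => ?_
  rw [map_smul, map_smul]
  congr 1
  ext f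
  have := h f g
  rwa [matEntry_eq_apply, matEntry_eq_apply] at this
lemma matEntry_comp (A B : SpinOp N d) (f g : Fin N → Fin d) :
    matEntry (A.comp B) f g = ∑ h, matEntry A f h * matEntry B h g := by
  classical
  have hB : B (basisVec g) = ∑ h, matEntry B h g • basisVec h := by
    have := (EuclideanSpace.basisFun (Fin N → Fin d) ℂ).sum_repr (B (basisVec g))
    rw [← this]
    refine Finset.sum_congr rfl fun h _ => ?_
    rw [matEntry_eq_apply]
    simp [basisVec, EuclideanSpace.basisFun_apply, EuclideanSpace.basisFun_repr]
  rw [matEntry, ContinuousLinearMap.comp_apply, hB, map_sum, inner_sum]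
  refine Finset.sum_congr rfl fun h _ => ?_
  rw [map_smul, inner_smul_right]
  rw [matEntry, matEntry, mul_comm]

lemma commute_of_disjoint_support {X Y : Finset (Fin N)} {A B : SpinOp N d}
    (hA : SupportedOn X A) (hB : SupportedOn Y B) (hXY : Disjoint X Y) :
    A.comp B = B.comp A := by
  classical
  apply spinOp_ext
  intro f g
  rw [matEntry_comp, matEntry_comp]
  set h₀ : Fin N → Fin d := fun i => if i ∈ X then g i else f i with hh₀
  set h₁ : Fin N → Fin d := fun i => if i ∈ Y then g i else f i with hh₁
  have key₀ : ∀ h, h ≠ h₀ → matEntry A f h * matEntry B h g = 0 := by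
    intro h hne
    by_contra hz
    have hA0 : matEntry A f h ≠ 0 := fun e => hz (by simp [e])
    have hB0 : matEntry B h g ≠ 0 := fun e => hz (by simp [e])
    apply hne; funext i
    by_cases hiX : i ∈ X
    · have hiY : i ∉ Y := fun hy => (Finset.disjoint_left.mp hXY hiX) hy
      have : h i = g i := by
        by_contra hne'
        exact hB0 (hB.1 h g ⟨i, hiY, hne'⟩)
      simp [hh₀, hiX, this]
    · have : f i = h i := by
        by_contra hne'
        exact hA0 (hA.1 f h ⟨i, hiX, hne'⟩)
      simp [hh₀, hiX, ← this]
  have key₁ : ∀ h, h ≠ h₁ → matEntry B f h * matEntry A h g = 0 := by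
    intro h hne
    by_contra hz
    have hB0 : matEntry B f h ≠ 0 := fun e => hz (by simp [e])
    have hA0 : matEntry A h g ≠ 0 := fun e => hz (by simp [e])
    apply hne; funext i
    by_cases hiY : i ∈ Y
    · have hiX : i ∉ X := fun hx => (Finset.disjoint_left.mp hXY hx) hiY
      have : h i = g i := by
        by_contra hne'
        exact hA0 (hA.1 h g ⟨i, hiX, hne'⟩)
      simp [hh₁, hiY, this]
    · have : f i = h i := by
        by_contra hne'
        exact hB0 (hB.1 f h ⟨i, hiY, hne'⟩)
      simp [hh₁, hiY, ← this]
  rw [Finset.sum_eq_single h₀ (fun h _ hne => key₀ h hne) (by simp),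
      Finset.sum_eq_single h₁ (fun h _ hne => key₁ h hne) (by simp)]
  by_cases hfg : ∀ i, i ∉ X → i ∉ Y → f i = g i
  · have e1 : matEntry A f h₀ = matEntry A h₁ g := by
      apply hA.2
      · intro i hi
        have hiY : i ∉ Y := fun hy => (Finset.disjoint_left.mp hXY hi) hy
        simp [hh₁, hiY]
      · intro i hi; simp [hh₀, hi]
      · intro i hi; simp [hh₀, hi]
      · intro i hi
        by_cases hiY : i ∈ Y
        · simp [hh₁, hiY]
        · simp [hh₁, hiY, hfg i hi hiY]
    have e2 : matEntry B h₀ g = matEntry B f h₁ := by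
      apply hB.2
      · intro i hi
        have hiX : i ∉ X := fun hx => (Finset.disjoint_left.mp hXY hx) hi
        simp [hh₀, hiX]
      · intro i hi; simp [hh₁, hi]
      · intro i hi
        by_cases hiX : i ∈ X
        · simp [hh₀, hiX]
        · simp [hh₀, hiX, hfg i hiX hi]
      · intro i hi; simp [hh₁, hi]
    rw [e1, e2]; ring
  · push_neg at hfg
    obtain ⟨i, hiX, hiY, hne⟩ := hfg
    have z1 : matEntry B h₀ g = 0 := by
      apply hB.1
      exact ⟨i, hiY, by simp [hh₀, hiX]; exact hne⟩
    have z2 : matEntry A h₁ g = 0 := by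
      apply hA.1
      exact ⟨i, hiX, by simp [hh₁, hiY]; exact hne⟩
    rw [z1, z2]; ring
lemma parseval {ι : Type*} [Fintype ι] {E : Type*} [NormedAddCommGroup E]
    [InnerProductSpace ℂ E] (b : OrthonormalBasis ι ℂ E) (v : E) :
    ‖v‖ ^ 2 = ∑ i, ‖(inner ℂ (b i) v : ℂ)‖ ^ 2 := by
  have h1 : ‖v‖ = ‖b.repr v‖ := (b.repr.norm_map v).symm
  rw [h1, EuclideanSpace.norm_eq, Real.sq_sqrt (by positivity)]
  exact Finset.sum_congr rfl fun i _ => by rw [b.repr_apply_apply]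

lemma eigSpan_coord_zero {A : SpinOp N d} (hA : IsSelfAdjoint A) (P : ℝ → Prop)
    {n : ℕ} (hn : Module.finrank ℂ (SpinSpace N d) = n)
    (i : Fin n) (hPi : ¬ P ((ContinuousLinearMap.isSelfAdjoint_iff_isSymmetric.mp hA).eigenvalues hn i))
    {φ : SpinSpace N d} (hφ : φ ∈ eigSpan A P) :
    (inner ℂ ((ContinuousLinearMap.isSelfAdjoint_iff_isSymmetric.mp hA).eigenvectorBasis hn i) φ : ℂ) = 0 := by
  set hS := ContinuousLinearMap.isSelfAdjoint_iff_isSymmetric.mp hA with hhS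
  set b := hS.eigenvectorBasis hn
  set μ := hS.eigenvalues hn
  have hker : eigSpan A P ≤ LinearMap.ker (innerSL ℂ (b i)).toLinearMap := by
    refine iSup₂_le fun a ha => ?_
    intro v hv
    have hv' : A v = (a : ℂ) • v := Module.End.mem_eigenspace_iff.mp hv
    have h1 : (μ i : ℂ) * inner ℂ (b i) v = (a : ℂ) * inner ℂ (b i) v := by
      have hbi : A (b i) = (μ i : ℂ) • b i := hS.apply_eigenvectorBasis hn i
      have := hS (b i) v
      simp only [ContinuousLinearMap.coe_coe] at this
      rw [hbi] at this
      rw [inner_smul_left, Complex.conj_ofReal] at this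
      rw [this]
      show (inner ℂ (b i) (A v) : ℂ) = _
      rw [hv', inner_smul_right]
    have hne : (μ i : ℂ) ≠ (a : ℂ) := by
      intro he
      exact hPi (by rwa [Complex.ofReal_inj.mp he])
    have := sub_eq_zero.mpr h1
    rw [← sub_mul] at this
    rcases mul_eq_zero.mp this with h | h
    · exact absurd (sub_eq_zero.mp h) hne
    · exact h
  exact hker hφ

lemma eigSpan_invariant {A : SpinOp N d} (P : ℝ → Prop)
    {φ : SpinSpace N d} (hφ : φ ∈ eigSpan A P) : A φ ∈ eigSpan A P := by
  have : Submodule.map (A : SpinSpace N d →ₗ[ℂ] SpinSpace N d) (eigSpan A P) ≤ eigSpan A P := by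
    rw [eigSpan, Submodule.map_iSup]
    refine iSup_le fun a => ?_
    rw [Submodule.map_iSup]
    refine iSup_le fun ha => ?_
    refine le_trans ?_ (le_iSup₂ (f := fun a (_ : P a) =>
      Module.End.eigenspace (A : SpinSpace N d →ₗ[ℂ] SpinSpace N d) (a : ℂ)) a ha)
    rintro x ⟨y, hy, rfl⟩
    have : (A : SpinSpace N d →ₗ[ℂ] SpinSpace N d) y = (a : ℂ) • y :=
      Module.End.mem_eigenspace_iff.mp hy
    rw [Module.End.mem_eigenspace_iff]
    show (A : SpinSpace N d →ₗ[ℂ] SpinSpace N d) (A y) = _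
    rw [show A y = (a:ℂ) • y from this, map_smul, this]
  exact this ⟨φ, hφ, rfl⟩

lemma cheby {A : SpinOp N d} (hA : IsSelfAdjoint A) (P : ℝ → Prop) (c r : ℝ) (hr : 0 ≤ r)
    (hP : ∀ x, P x → r ≤ |x - c|) (ψ : SpinSpace N d) :
    r ^ 2 * (inner ℂ ψ (specProj A P ψ) : ℂ).re ≤ ‖A ψ - (c : ℂ) • ψ‖ ^ 2 := by
  classical
  set hS := ContinuousLinearMap.isSelfAdjoint_iff_isSymmetric.mp hA with hhS
  set n := Module.finrank ℂ (SpinSpace N d) with hnn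
  have hn : Module.finrank ℂ (SpinSpace N d) = n := rfl
  set b := hS.eigenvectorBasis hn with hb
  set μ := hS.eigenvalues hn with hμ
  set V := eigSpan A P with hV
  set φ : SpinSpace N d := ↑(V.orthogonalProjectionOnto ψ) with hφdef
  have hφV : φ ∈ V := (V.orthogonalProjectionOnto ψ).2
  have hproj : specProj A P ψ = φ := rfl
  -- step 1 : inner ℂ ψ (specProj ψ) = ‖φ‖ ^ 2
  have h1 : (inner ℂ ψ (specProj A P ψ) : ℂ).re = ‖φ‖ ^ 2 := by
    rw [hproj]
    have : (inner ℂ ψ φ : ℂ) = inner ℂ (ψ - φ) φ + inner ℂ φ φ := by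
      rw [← inner_add_left]
      rw [sub_add_cancel]
    rw [this, show (inner ℂ (ψ - φ) φ : ℂ) = 0 from Submodule.starProjection_inner_eq_zero (K := V) ψ φ hφV, zero_add,
      inner_self_eq_norm_sq_to_K]
    norm_cast
  -- step 2 : r^2 ‖φ‖^2 ≤ ‖Aφ - cφ‖^2
  have hcoord : ∀ i, (inner ℂ (b i) (A φ - (c:ℂ) • φ) : ℂ)
      = ((μ i : ℂ) - c) * inner ℂ (b i) φ := by
    intro i
    rw [inner_sub_right, inner_smul_right]
    have hbi : A (b i) = (μ i : ℂ) • b i := hS.apply_eigenvectorBasis hn i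
    have := hS (b i) φ
    simp only [ContinuousLinearMap.coe_coe] at this
    rw [hbi, inner_smul_left, Complex.conj_ofReal] at this
    have h3 : (inner ℂ (b i) (A φ) : ℂ) = (μ i : ℂ) * inner ℂ (b i) φ := this.symm
    rw [h3]; ring
  have h2 : r ^ 2 * ‖φ‖ ^ 2 ≤ ‖A φ - (c : ℂ) • φ‖ ^ 2 := by
    rw [parseval b φ, parseval b (A φ - (c:ℂ) • φ), Finset.mul_sum]
    refine Finset.sum_le_sum fun i _ => ?_
    rw [hcoord i]
    by_cases hz : (inner ℂ (b i) φ : ℂ) = 0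
    · simp [hz]
    · have hPi : P (μ i) := by
        by_contra hPi
        exact hz (eigSpan_coord_zero hA P hn i hPi hφV)
      have hri : r ≤ |μ i - c| := hP _ hPi
      rw [norm_mul, mul_pow]
      have hnorm : ‖((μ i : ℂ) - c)‖ = |μ i - c| := by
        rw [← Complex.ofReal_sub, Complex.norm_real, Real.norm_eq_abs]
      rw [hnorm]
      have : r ^ 2 ≤ |μ i - c| ^ 2 := by
        apply pow_le_pow_left₀ hr hri
      exact mul_le_mul_of_nonneg_right this (by positivity)
  -- step 3 : pythagoras
  have h3 : ‖A φ - (c : ℂ) • φ‖ ^ 2 ≤ ‖A ψ - (c : ℂ) • ψ‖ ^ 2 := by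
    set ψ' : SpinSpace N d := ψ - φ with hψ'
    have hψ'V : ψ' ∈ Vᗮ := Submodule.sub_starProjection_mem_orthogonal (K := V) ψ
    set x := A φ - (c:ℂ) • φ with hx
    set y := A ψ' - (c:ℂ) • ψ' with hy
    have hxV : x ∈ V := V.sub_mem (eigSpan_invariant P hφV) (V.smul_mem _ hφV)
    have hyV : y ∈ Vᗮ := by
      rw [Submodule.mem_orthogonal]
      intro u hu
      rw [inner_sub_right, inner_smul_right]
      have h4 : (inner ℂ u (A ψ') : ℂ) = inner ℂ (A u) ψ' := (hS u ψ').symm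
      have h5 : (inner ℂ (A u) ψ' : ℂ) = 0 :=
        (Submodule.mem_orthogonal V ψ').mp hψ'V _ (eigSpan_invariant P hu)
      have h6 : (inner ℂ u ψ' : ℂ) = 0 := (Submodule.mem_orthogonal V ψ').mp hψ'V _ hu
      rw [h4, h5, h6]; ring
    have hsum : A ψ - (c:ℂ) • ψ = x + y := by
      have hψeq : ψ = φ + ψ' := by rw [hψ']; rw [add_sub_cancel]
      rw [hψeq, map_add, smul_add, hx, hy]
      abel
    have hinner : (inner ℂ x y : ℂ) = 0 := (Submodule.mem_orthogonal V y).mp hyV x hxV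
    have hpy := norm_add_sq_eq_norm_sq_add_norm_sq_of_inner_eq_zero x y hinner
    rw [hsum]
    nlinarith [norm_nonneg y, norm_nonneg x, norm_nonneg (x + y)]
  calc r ^ 2 * (inner ℂ ψ (specProj A P ψ) : ℂ).re = r ^ 2 * ‖φ‖ ^ 2 := by rw [h1]
    _ ≤ ‖A φ - (c:ℂ) • φ‖ ^ 2 := h2
    _ ≤ _ := h3
lemma commute_of_disjoint_support' {X Y : Finset (Fin N)} {A B : SpinOp N d}
    (hA : SupportedOn X A) (hB : SupportedOn Y B) (hXY : Disjoint X Y) :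
    Commute A B := by
  have := commute_of_disjoint_support hA hB hXY
  rw [Commute, SemiconjBy, ContinuousLinearMap.mul_def, ContinuousLinearMap.mul_def, this]

lemma double_comm_bound {Y : Finset (Fin N)} {hop : SpinOp N d}
    (hsup : SupportedOn Y hop) {L : Finset (Fin N)} {a : Fin N → SpinOp N d}
    (ha : ∀ i ∈ L, SupportedOn {i} (a i) ∧ ‖a i‖ ≤ 1) :
    ‖(∑ i ∈ L, a i) * ((hop * (∑ i ∈ L, a i)) - (∑ i ∈ L, a i) * hop)
      - ((hop * (∑ i ∈ L, a i)) - (∑ i ∈ L, a i) * hop) * (∑ i ∈ L, a i)‖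
      ≤ 4 * ((L.filter (fun i => i ∈ Y)).card : ℝ) ^ 2 * ‖hop‖ := by
  classical
  set A : SpinOp N d := ∑ i ∈ L, a i with hAdef
  set Lt : Finset (Fin N) := L.filter (fun i => i ∈ Y) with hLt
  set C : Fin N → SpinOp N d := fun i => hop * a i - a i * hop with hC
  have hcomm : ∀ i ∈ L, i ∉ Y → Commute hop (a i) := fun i hi hiY =>
    (commute_of_disjoint_support' (ha i hi).1 hsup
      (by simp [Finset.disjoint_singleton_left, hiY])).symm
  have hB : hop * A - A * hop = ∑ i ∈ Lt, C i := by
    rw [hAdef, Finset.mul_sum, Finset.sum_mul, ← Finset.sum_sub_distrib, hLt, Finset.sum_filter]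
    refine Finset.sum_congr rfl fun i hi => ?_
    by_cases hiY : i ∈ Y
    · simp [hC, hiY]
    · simp [hC, hiY, (hcomm i hi hiY).eq]
  have hCa : ∀ j ∈ L, j ∉ Y → Commute (a j) (hop * A - A * hop) := by
    intro j hj hjY
    rw [hB]
    refine Commute.sum_right _ _ _ fun i hi => ?_
    have hiY : i ∈ Y := (Finset.mem_filter.mp hi).2
    have hiL : i ∈ L := (Finset.mem_filter.mp hi).1
    have hij : j ≠ i := fun he => hjY (he ▸ hiY)
    have c1 : Commute (a j) hop := (hcomm j hj hjY).symm
    have c2 : Commute (a j) (a i) :=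
      commute_of_disjoint_support' (ha j hj).1 (ha i hiL).1
        (Finset.disjoint_singleton.mpr hij)
    exact ((c1.mul_right c2).sub_right (c2.mul_right c1))
  set B : SpinOp N d := hop * A - A * hop with hBdef
  have hK : A * B - B * A = ∑ j ∈ Lt, (a j * B - B * a j) := by
    rw [hAdef, Finset.sum_mul, Finset.mul_sum, ← Finset.sum_sub_distrib, hLt, Finset.sum_filter]
    refine Finset.sum_congr rfl fun j hj => ?_
    by_cases hjY : j ∈ Y
    · simp [hjY]
    · simp [hjY, (hCa j hj hjY).eq]
  have hBnorm : ‖B‖ ≤ 2 * (Lt.card : ℝ) * ‖hop‖ := by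
    rw [hB]
    calc ‖∑ i ∈ Lt, C i‖ ≤ ∑ i ∈ Lt, ‖C i‖ := norm_sum_le _ _
      _ ≤ ∑ _i ∈ Lt, 2 * ‖hop‖ := by
          refine Finset.sum_le_sum fun i hi => ?_
          have hiL : i ∈ L := (Finset.mem_filter.mp hi).1
          have hai : ‖a i‖ ≤ 1 := (ha i hiL).2
          have h1 : ‖hop * a i‖ ≤ ‖hop‖ := by
            refine le_trans (norm_mul_le _ _) ?_
            nlinarith [norm_nonneg hop, norm_nonneg (a i)]
          have h2 : ‖a i * hop‖ ≤ ‖hop‖ := by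
            refine le_trans (norm_mul_le _ _) ?_
            nlinarith [norm_nonneg hop, norm_nonneg (a i)]
          calc ‖C i‖ ≤ ‖hop * a i‖ + ‖a i * hop‖ := norm_sub_le _ _
            _ ≤ 2 * ‖hop‖ := by linarith
      _ = 2 * (Lt.card : ℝ) * ‖hop‖ := by rw [Finset.sum_const, nsmul_eq_mul]; ring
  have hhopnn : (0:ℝ) ≤ ‖hop‖ := norm_nonneg _
  calc ‖A * B - B * A‖ ≤ ∑ j ∈ Lt, ‖a j * B - B * a j‖ := by
        rw [hK]; exact norm_sum_le _ _
    _ ≤ ∑ _j ∈ Lt, 2 * (2 * (Lt.card : ℝ) * ‖hop‖) := by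
        refine Finset.sum_le_sum fun j hj => ?_
        have hjL : j ∈ L := (Finset.mem_filter.mp hj).1
        have haj : ‖a j‖ ≤ 1 := (ha j hjL).2
        have hBnn : (0:ℝ) ≤ ‖B‖ := norm_nonneg _
        have h1 : ‖a j * B‖ ≤ ‖B‖ := by
          refine le_trans (norm_mul_le _ _) ?_
          nlinarith [norm_nonneg (a j)]
        have h2 : ‖B * a j‖ ≤ ‖B‖ := by
          refine le_trans (norm_mul_le _ _) ?_
          nlinarith [norm_nonneg (a j)]
        calc ‖a j * B - B * a j‖ ≤ ‖a j * B‖ + ‖B * a j‖ := norm_sub_le _ _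
          _ ≤ 2 * ‖B‖ := by linarith
          _ ≤ 2 * (2 * (Lt.card : ℝ) * ‖hop‖) := by linarith
    _ = 4 * (Lt.card : ℝ) ^ 2 * ‖hop‖ := by rw [Finset.sum_const, nsmul_eq_mul]; ring
lemma sym_of_sa {T : SpinOp N d} (hT : IsSelfAdjoint T) (x y : SpinSpace N d) :
    (inner ℂ (T x) y : ℂ) = inner ℂ x (T y) := by
  have := (ContinuousLinearMap.isSelfAdjoint_iff_isSymmetric.mp hT) x y
  simpa using this

set_option maxHeartbeats 1000000 in
theorem ground_state_mean_median_distance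
    (g : ℝ) (k : ℕ) (hg : 0 < g) (hk : 0 < k) :
    ∃ C : ℝ, ∀ (N d : ℕ) (H : SpinOp N d) (δE : ℝ),
      IsKLocalHamiltonian k g H → 0 < δE →
      ∀ Ω : SpinSpace N d, IsGappedGround H Ω δE →
      ∀ L : Finset (Fin N), δE ≤ g * L.card →
      ∀ (a : Fin N → SpinOp N d) (A : SpinOp N d), IsAdditiveOn L a A →
      ∀ m : ℝ, IsMedian A Ω m →
        |(inner ℂ Ω (A Ω) : ℂ).re - m| ≤ C * Real.sqrt (L.card / δE) := by
  classical
  refine ⟨Real.sqrt (4 * k * g), ?_⟩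
  intro N d H δE hH hδE Ω hG L _hLg a A hA m hm
  obtain ⟨haL, hAdef⟩ := hA
  obtain ⟨hΩ1, hHΩ, _, hgap⟩ := hG
  obtain ⟨n, X, hop, hloc, hstr, hHdef⟩ := hH
  set c : ℝ := (inner ℂ Ω (A Ω) : ℂ).re with hc
  have hAsa : IsSelfAdjoint A := by
    rw [hAdef]
    exact Finset.sum_induction a IsSelfAdjoint (fun x y hx hy => IsSelfAdjoint.add (R := SpinOp N d) hx hy)
      (IsSelfAdjoint.zero (SpinOp N d)) (fun i hi => (haL i hi).2.1)
  have hHsa : IsSelfAdjoint H := by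
    rw [hHdef]
    exact Finset.sum_induction hop IsSelfAdjoint (fun x y hx hy => IsSelfAdjoint.add (R := SpinOp N d) hx hy)
      (IsSelfAdjoint.zero (SpinOp N d)) (fun t _ => (hloc t).2.2)
  -- the mean is real
  have hmean : (inner ℂ Ω (A Ω) : ℂ) = (c : ℂ) := by
    have h1 : (starRingEnd ℂ) (inner ℂ Ω (A Ω)) = inner ℂ Ω (A Ω) := by
      rw [inner_conj_symm, sym_of_sa hAsa]
    exact (Complex.conj_eq_iff_re.mp h1).symm
  set φ : SpinSpace N d := A Ω - (c : ℂ) • Ω with hφdef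
  have hinnerΩΩ : (inner ℂ Ω Ω : ℂ) = 1 := by
    rw [inner_self_eq_norm_sq_to_K, hΩ1]; norm_num
  have hortho : (inner ℂ Ω φ : ℂ) = 0 := by
    rw [hφdef, inner_sub_right, inner_smul_right, hinnerΩΩ, hmean]; ring
  have hgapφ : δE * ‖φ‖ ^ 2 ≤ (inner ℂ φ (H φ) : ℂ).re := hgap φ hortho
  -- the energy of φ as a double commutator
  set z : ℂ := inner ℂ (A Ω) (H (A Ω)) with hz
  have hHφ : H φ = H (A Ω) := by
    rw [hφdef, map_sub, map_smul, hHΩ, smul_zero, sub_zero]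
  have hEφ : (inner ℂ φ (H φ) : ℂ) = z := by
    rw [hHφ, hφdef, inner_sub_left, inner_smul_left]
    have h0 : (inner ℂ Ω (H (A Ω)) : ℂ) = 0 := by
      rw [← sym_of_sa hHsa Ω (A Ω), hHΩ, inner_zero_left]
    rw [h0, hz]; ring
  set B : SpinOp N d := H * A - A * H with hB
  set K : SpinOp N d := A * B - B * A with hK
  have h2z : (inner ℂ Ω (K Ω) : ℂ) = 2 * z := by
    have hBv : ∀ v, B v = H (A v) - A (H v) := fun v => by
      rw [hB]
      simp only [ContinuousLinearMap.sub_apply, ContinuousLinearMap.mul_apply]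
    have hKΩ : K Ω = A (H (A Ω)) - (H (A (A Ω)) - A (H (A Ω))) := by
      rw [hK]
      simp only [ContinuousLinearMap.sub_apply, ContinuousLinearMap.mul_apply]
      rw [hBv Ω, hBv (A Ω), hHΩ, map_zero, sub_zero]
    rw [hKΩ, inner_sub_right, inner_sub_right]
    have e1 : (inner ℂ Ω (A (H (A Ω))) : ℂ) = z := by
      rw [← sym_of_sa hAsa, hz]
    have e2 : (inner ℂ Ω (H (A (A Ω))) : ℂ) = 0 := by
      rw [← sym_of_sa hHsa, hHΩ, inner_zero_left]
    rw [e1, e2]; ring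
  have hre : (inner ℂ φ (H φ) : ℂ).re ≤ ‖K‖ / 2 := by
    have h1 : (inner ℂ Ω (K Ω) : ℂ).re ≤ ‖K‖ := by
      calc (inner ℂ Ω (K Ω) : ℂ).re ≤ ‖(inner ℂ Ω (K Ω) : ℂ)‖ := Complex.re_le_norm _
        _ ≤ ‖Ω‖ * ‖K Ω‖ := norm_inner_le_norm _ _
        _ ≤ ‖Ω‖ * (‖K‖ * ‖Ω‖) :=
            mul_le_mul_of_nonneg_left (K.le_opNorm Ω) (norm_nonneg _)
        _ = ‖K‖ := by rw [hΩ1]; ring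
    have h2 : 2 * (inner ℂ φ (H φ) : ℂ).re = (inner ℂ Ω (K Ω) : ℂ).re := by
      rw [hEφ, h2z, Complex.mul_re]
      norm_num
    linarith
  -- bound on the double commutator
  have hKnorm : ‖K‖ ≤ 4 * k * (g * L.card) := by
    have hKsum : K = ∑ t, (A * (hop t * A - A * hop t) - (hop t * A - A * hop t) * A) := by
      rw [hK, hB, hHdef, Finset.sum_mul, Finset.mul_sum]
      rw [← Finset.sum_sub_distrib]
      rw [Finset.mul_sum, Finset.sum_mul, ← Finset.sum_sub_distrib]
    have hdcb : ∀ t, ‖A * (hop t * A - A * hop t) - (hop t * A - A * hop t) * A‖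
        ≤ 4 * ((L.filter (fun i => i ∈ X t)).card : ℝ) ^ 2 * ‖hop t‖ := by
      intro t
      rw [hAdef]
      exact double_comm_bound (hloc t).2.1 (fun i hi => ⟨(haL i hi).1, (haL i hi).2.2⟩)
    have hcard : ∀ t, ((L.filter (fun i => i ∈ X t)).card : ℝ) ≤ k := by
      intro t
      have : (L.filter (fun i => i ∈ X t)).card ≤ (X t).card :=
        Finset.card_le_card fun i hi => (Finset.mem_filter.mp hi).2
      exact_mod_cast le_trans this (hloc t).1
    have hsum2 : ∑ t, ((L.filter (fun i => i ∈ X t)).card : ℝ) * ‖hop t‖ ≤ g * L.card := by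
      have hswap : ∑ t, ((L.filter (fun i => i ∈ X t)).card : ℝ) * ‖hop t‖
          = ∑ i ∈ L, ∑ t ∈ Finset.univ.filter (fun t => i ∈ X t), ‖hop t‖ := by
        have e1 : ∀ t : Fin n, ((L.filter (fun i => i ∈ X t)).card : ℝ) * ‖hop t‖
            = ∑ i ∈ L, (if i ∈ X t then ‖hop t‖ else 0) := by
          intro t
          rw [← Finset.sum_filter, Finset.sum_const, nsmul_eq_mul]
        rw [Finset.sum_congr rfl fun t _ => e1 t, Finset.sum_comm]
        exact Finset.sum_congr rfl fun i _ => (Finset.sum_filter _ _).symm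
      rw [hswap]
      calc ∑ i ∈ L, ∑ t ∈ Finset.univ.filter (fun t => i ∈ X t), ‖hop t‖
          ≤ ∑ _i ∈ L, g := Finset.sum_le_sum fun i _ => hstr i
        _ = g * L.card := by rw [Finset.sum_const, nsmul_eq_mul]; ring
    calc ‖K‖ ≤ ∑ t, ‖A * (hop t * A - A * hop t) - (hop t * A - A * hop t) * A‖ := by
          rw [hKsum]; exact norm_sum_le _ _
      _ ≤ ∑ t, 4 * (k : ℝ) * (((L.filter (fun i => i ∈ X t)).card : ℝ) * ‖hop t‖) := by
          refine Finset.sum_le_sum fun t _ => le_trans (hdcb t) ?_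
          have hc1 : (0:ℝ) ≤ ((L.filter (fun i => i ∈ X t)).card : ℝ) := Nat.cast_nonneg _
          have hc2 := hcard t
          have hn : (0:ℝ) ≤ ‖hop t‖ := norm_nonneg _
          have hsq : ((L.filter (fun i => i ∈ X t)).card : ℝ) ^ 2
              ≤ (k : ℝ) * ((L.filter (fun i => i ∈ X t)).card : ℝ) := by nlinarith
          have := mul_le_mul_of_nonneg_right hsq hn
          nlinarith
      _ = 4 * k * ∑ t, ((L.filter (fun i => i ∈ X t)).card : ℝ) * ‖hop t‖ := by
          rw [Finset.mul_sum]
      _ ≤ 4 * k * (g * L.card) := by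
          have : (0:ℝ) ≤ 4 * k := by positivity
          exact mul_le_mul_of_nonneg_left hsum2 this
  -- variance bound
  have hvar0 : δE * ‖φ‖ ^ 2 ≤ 2 * k * g * L.card :=
    calc δE * ‖φ‖ ^ 2 ≤ (inner ℂ φ (H φ) : ℂ).re := hgapφ
      _ ≤ ‖K‖ / 2 := hre
      _ ≤ 2 * k * g * L.card := by
          have := hKnorm; linarith
  have hvar : ‖φ‖ ^ 2 ≤ 2 * k * g * L.card / δE := by
    rw [le_div_iff₀ hδE, mul_comm]
    exact hvar0
  -- Chebyshev
  have hcheb : (m - c) ^ 2 * (1 / 2) ≤ ‖φ‖ ^ 2 := by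
    rcases le_total c m with hcm | hmc
    · have hP : ∀ x : ℝ, m ≤ x → m - c ≤ |x - c| :=
        fun x hx => le_trans (by linarith) (le_abs_self _)
      have h := cheby hAsa (fun a => m ≤ a) c (m - c) (by linarith) hP Ω
      have hmed := hm.2
      rw [← hφdef] at h
      nlinarith [sq_nonneg (m - c)]
    · have hP : ∀ x : ℝ, x ≤ m → c - m ≤ |x - c| := by
        intro x hx
        rw [abs_sub_comm]
        exact le_trans (by linarith) (le_abs_self _)
      have h := cheby hAsa (fun a => a ≤ m) c (c - m) (by linarith) hP Ω
      have hmed := hm.1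
      rw [← hφdef] at h
      nlinarith [sq_nonneg (c - m)]
  -- conclusion
  have hsq : (c - m) ^ 2 ≤ 4 * k * g * ((L.card : ℝ) / δE) := by
    have h1 : (m - c) ^ 2 ≤ 2 * ‖φ‖ ^ 2 := by linarith
    have h2 : (c - m) ^ 2 = (m - c) ^ 2 := by ring
    have h3 : 2 * (2 * k * g * L.card / δE) = 4 * k * g * ((L.card : ℝ) / δE) := by
      ring
    calc (c - m) ^ 2 = (m - c) ^ 2 := h2
      _ ≤ 2 * ‖φ‖ ^ 2 := h1
      _ ≤ 2 * (2 * k * g * L.card / δE) := by linarith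
      _ = 4 * k * g * ((L.card : ℝ) / δE) := h3
  calc |c - m| = Real.sqrt ((c - m) ^ 2) := (Real.sqrt_sq_eq_abs _).symm
    _ ≤ Real.sqrt (4 * k * g * ((L.card : ℝ) / δE)) := Real.sqrt_le_sqrt hsq
    _ = Real.sqrt (4 * k * g) * Real.sqrt ((L.card : ℝ) / δE) :=
        Real.sqrt_mul (by positivity) _
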